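/- The function V(x) = (1/(2(p−1)))‖x‖_p² with p ∈ (1, 2] is 1-strongly convex with respect to the ℓ_p-norm on ℝ^d; equivalently, ‖·‖_p² is (p−1)-strongly convex in ‖·‖_p for p ∈ (1, 2]. -/

import Mathlib

open scoped BigOperators

open Real Set


lemma bcl_h {p : ℝ} (hp1 : 1 < p) (hp2 : p ≤ 2) {t : ℝ} (ht : t ∈ Icc (0:ℝ) 1) :
    (1 - t)^(p-1) + 2*(p-1)*t ≤ (1+t)^(p-1) := by
  set f : ℝ → ℝ := fun t => (1+t)^(p-1) - (1-t)^(p-1) - 2*(p-1)*t with hf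
  have hder : ∀ t ∈ Ioo (0:ℝ) 1, HasDerivAt f
      ((p-1)*(1+t)^(p-2) + (p-1)*(1-t)^(p-2) - 2*(p-1)) t := by
    intro t ht
    obtain ⟨ht0, ht1⟩ := ht
    have h1 : HasDerivAt (fun t : ℝ => (1+t)^(p-1)) (1 * (p-1) * (1+t)^(p-1-1)) t :=
      (HasDerivAt.rpow_const ((hasDerivAt_id t).const_add 1) (Or.inl (by norm_num; nlinarith)))
    have h2 : HasDerivAt (fun t : ℝ => (1-t)^(p-1)) ((-1) * (p-1) * (1-t)^(p-1-1)) t :=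
      (HasDerivAt.rpow_const ((hasDerivAt_id t).const_sub 1) (Or.inl (by nlinarith)))
    have h3 : HasDerivAt (fun t : ℝ => 2*(p-1)*t) (2*(p-1)) t := by
      simpa using (hasDerivAt_id t).const_mul (2*(p-1))
    have := (h1.sub h2).sub h3
    refine this.congr_deriv ?_
    ring_nf
  have hcont : ContinuousOn f (Icc (0:ℝ) 1) := by
    apply ContinuousOn.sub
    apply ContinuousOn.sub
    · exact ContinuousOn.rpow_const (by fun_prop) (fun x hx => Or.inl (by nlinarith [hx.1]))
    · exact ContinuousOn.rpow_const (by fun_prop) (fun x hx => Or.inr (by linarith))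
    · fun_prop
  have hmono : MonotoneOn f (Icc (0:ℝ) 1) := by
    apply monotoneOn_of_deriv_nonneg (convex_Icc 0 1) hcont
    · intro x hx
      rw [interior_Icc] at hx
      exact (hder x hx).differentiableAt.differentiableWithinAt
    · intro x hx
      rw [interior_Icc] at hx
      rw [(hder x hx).deriv]
      obtain ⟨hx0, hx1⟩ := hx
      have hA : (0:ℝ) < (1+x)^(p-2) := rpow_pos_of_pos (by linarith) _
      have hB : (0:ℝ) < (1-x)^(p-2) := rpow_pos_of_pos (by linarith) _
      have hAB : (1:ℝ) ≤ (1+x)^(p-2) * (1-x)^(p-2) := by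
        rw [← Real.mul_rpow (by linarith) (by linarith)]
        apply Real.one_le_rpow_of_pos_of_le_one_of_nonpos
        · nlinarith
        · nlinarith
        · linarith
      have h2le : (2:ℝ) ≤ (1+x)^(p-2) + (1-x)^(p-2) := by
        nlinarith [sq_nonneg ((1+x)^(p-2) - (1-x)^(p-2))]
      nlinarith
  have h0 : f 0 = 0 := by simp [hf]
  have := hmono (left_mem_Icc.2 zero_le_one) ht ht.1
  rw [h0] at this
  simp only [hf] at this
  linarith

lemma bcl_g {p : ℝ} (hp1 : 1 < p) (hp2 : p ≤ 2) {t : ℝ} (ht : t ∈ Icc (0:ℝ) 1) :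
    2 + p*(p-1)*t^2 ≤ (1+t)^p + (1-t)^p := by
  set f : ℝ → ℝ := fun t => (1+t)^p + (1-t)^p - p*(p-1)*t^2 with hf
  have hder : ∀ t ∈ Ioo (0:ℝ) 1, HasDerivAt f
      (p*(1+t)^(p-1) - p*(1-t)^(p-1) - p*(p-1)*(2*t)) t := by
    intro t ht
    obtain ⟨ht0, ht1⟩ := ht
    have h1 : HasDerivAt (fun t : ℝ => (1+t)^p) (1 * p * (1+t)^(p-1)) t :=
      (HasDerivAt.rpow_const ((hasDerivAt_id t).const_add 1) (Or.inl (by nlinarith)))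
    have h2 : HasDerivAt (fun t : ℝ => (1-t)^p) ((-1) * p * (1-t)^(p-1)) t :=
      (HasDerivAt.rpow_const ((hasDerivAt_id t).const_sub 1) (Or.inl (by nlinarith)))
    have h3 : HasDerivAt (fun t : ℝ => p*(p-1)*t^2) (p*(p-1)*(2*t)) t := by
      have := (hasDerivAt_pow 2 t).const_mul (p*(p-1))
      simpa using this
    have := (h1.add h2).sub h3
    refine this.congr_deriv ?_
    ring_nf
  have hcont : ContinuousOn f (Icc (0:ℝ) 1) := by
    apply ContinuousOn.sub
    apply ContinuousOn.add
    · exact ContinuousOn.rpow_const (by fun_prop) (fun x hx => Or.inl (by nlinarith [hx.1]))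
    · exact ContinuousOn.rpow_const (by fun_prop) (fun x hx => Or.inr (by linarith))
    · fun_prop
  have hmono : MonotoneOn f (Icc (0:ℝ) 1) := by
    apply monotoneOn_of_deriv_nonneg (convex_Icc 0 1) hcont
    · intro x hx
      rw [interior_Icc] at hx
      exact (hder x hx).differentiableAt.differentiableWithinAt
    · intro x hx
      rw [interior_Icc] at hx
      rw [(hder x hx).deriv]
      obtain ⟨hx0, hx1⟩ := hx
      have key := bcl_h hp1 hp2 (mem_Icc.2 ⟨hx0.le, hx1.le⟩)
      nlinarith
  have h0 : f 0 = 2 := by norm_num [hf]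
  have := hmono (left_mem_Icc.2 zero_le_one) ht ht.1
  rw [h0] at this
  simp only [hf] at this
  linarith

lemma bcl_core {p : ℝ} (hp1 : 1 < p) (hp2 : p ≤ 2) {a b : ℝ} (hb : 0 ≤ b) (hba : b ≤ a) :
    (a^2 + (p-1)*b^2)^(p/2) ≤ ((a+b)^p + (a-b)^p)/2 := by
  have ha : 0 ≤ a := hb.trans hba
  rcases eq_or_lt_of_le ha with rfl | ha'
  · have hb0 : b = 0 := le_antisymm (by linarith) hb
    subst hb0
    simp [Real.zero_rpow (by positivity : (p/2) ≠ 0), Real.zero_rpow (by positivity : p ≠ 0)]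
  · set t := b / a with htdef
    have ht0 : 0 ≤ t := div_nonneg hb ha
    have ht1 : t ≤ 1 := (div_le_one ha').2 hba
    have hbt : b = a * t := by rw [htdef, mul_div_cancel₀ _ ha'.ne']
    have e1 : a^2 + (p-1)*b^2 = a^2 * (1 + (p-1)*t^2) := by rw [hbt]; ring
    have h1t : (0:ℝ) ≤ 1 + (p-1)*t^2 := by nlinarith
    have e2 : (a^2 + (p-1)*b^2)^(p/2) = a^p * (1 + (p-1)*t^2)^(p/2) := by
      rw [e1, Real.mul_rpow (by positivity) h1t]
      congr 1
      rw [← Real.rpow_natCast a 2, ← Real.rpow_mul ha]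
      push_cast
      rw [show (2:ℝ)*(p/2) = p by ring]
    -- Bernoulli
    have hBern : (1 + (p-1)*t^2)^(p/2) ≤ 1 + (p/2)*((p-1)*t^2) :=
      rpow_one_add_le_one_add_mul_self (by nlinarith) (by positivity) (by linarith)
    have hg := bcl_g hp1 hp2 (mem_Icc.2 ⟨ht0, ht1⟩)
    have step : (1 + (p-1)*t^2)^(p/2) ≤ ((1+t)^p + (1-t)^p)/2 := by
      calc (1 + (p-1)*t^2)^(p/2) ≤ 1 + (p/2)*((p-1)*t^2) := hBern
        _ = (2 + p*(p-1)*t^2)/2 := by ring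
        _ ≤ ((1+t)^p + (1-t)^p)/2 := by linarith
    have hap : (0:ℝ) ≤ a^p := Real.rpow_nonneg ha _
    calc (a^2 + (p-1)*b^2)^(p/2) = a^p * (1 + (p-1)*t^2)^(p/2) := e2
      _ ≤ a^p * (((1+t)^p + (1-t)^p)/2) := by
          exact mul_le_mul_of_nonneg_left step hap
      _ = (a^p * (1+t)^p + a^p * (1-t)^p)/2 := by ring
      _ = ((a+b)^p + (a-b)^p)/2 := by
          rw [← Real.mul_rpow ha (by linarith), ← Real.mul_rpow ha (by linarith)]
          rw [hbt]
          ring_nf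

lemma bcl_key {p : ℝ} (hp1 : 1 < p) (hp2 : p ≤ 2) {a b : ℝ} (ha : 0 ≤ a) (hb : 0 ≤ b) :
    (a^2 + (p-1)*b^2)^(p/2) ≤ ((a+b)^p + |a-b|^p)/2 := by
  rcases le_total b a with h | h
  · rw [abs_of_nonneg (by linarith)]
    exact bcl_core hp1 hp2 hb h
  · rw [abs_of_nonpos (by linarith)]
    have hsq : a^2 ≤ b^2 := by nlinarith
    have h1 : a^2 + (p-1)*b^2 ≤ b^2 + (p-1)*a^2 := by
      nlinarith [mul_nonneg (sub_nonneg.2 hsq) (by linarith : (0:ℝ) ≤ 2 - p)]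
    calc (a^2 + (p-1)*b^2)^(p/2) ≤ (b^2 + (p-1)*a^2)^(p/2) :=
          Real.rpow_le_rpow (by nlinarith) h1 (by positivity)
      _ ≤ ((b+a)^p + (b-a)^p)/2 := bcl_core hp1 hp2 ha h
      _ = ((a+b)^p + (-(a-b))^p)/2 := by ring_nf
lemma bcl_scalar {p : ℝ} (hp1 : 1 < p) (hp2 : p ≤ 2) (a b : ℝ) :
    (a^2 + (p-1)*b^2)^(p/2) ≤ (|a+b|^p + |a-b|^p)/2 := by
  have key := bcl_key hp1 hp2 (abs_nonneg a) (abs_nonneg b)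
  rw [sq_abs, sq_abs] at key
  refine key.trans (le_of_eq ?_)
  have habs : |a| + |b| = |a+b| ∧ |(|a| - |b|)| = |a-b| ∨
      |a| + |b| = |a-b| ∧ |(|a| - |b|)| = |a+b| := by
    rcases le_total 0 a with ha | ha <;> rcases le_total 0 b with hb | hb
    · left
      rw [abs_of_nonneg ha, abs_of_nonneg hb, abs_of_nonneg (by linarith)]
      exact ⟨rfl, rfl⟩
    · right
      constructor
      · rw [abs_of_nonneg ha, abs_of_nonpos hb, abs_of_nonneg (by linarith : (0:ℝ) ≤ a - b)]
        ring
      · rw [abs_of_nonneg ha, abs_of_nonpos hb]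
        congr 1
        ring
    · right
      constructor
      · rw [abs_of_nonpos ha, abs_of_nonneg hb, abs_of_nonpos (by linarith : a - b ≤ 0)]
        ring
      · rw [abs_of_nonpos ha, abs_of_nonneg hb, ← abs_neg]
        congr 1
        ring
    · left
      constructor
      · rw [abs_of_nonpos ha, abs_of_nonpos hb, abs_of_nonpos (by linarith : a + b ≤ 0)]
        ring
      · rw [abs_of_nonpos ha, abs_of_nonpos hb, ← abs_neg]
        congr 1
        ring
  rcases habs with ⟨h1, h2⟩ | ⟨h1, h2⟩
  · rw [h1, h2]
  · rw [h1, h2]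
    ring

lemma rev_mink {d : ℕ} {r : ℝ} (hr0 : 0 < r) (hr1 : r ≤ 1) (u v : Fin d → ℝ)
    (hu : ∀ i, 0 ≤ u i) (hv : ∀ i, 0 ≤ v i) :
    (∑ i, u i ^ r) ^ (1/r) + (∑ i, v i ^ r) ^ (1/r) ≤ (∑ i, (u i + v i) ^ r) ^ (1/r) := by
  have huv : ∀ i, (0:ℝ) ≤ u i + v i := fun i => add_nonneg (hu i) (hv i)
  have hsu : (0:ℝ) ≤ ∑ i, u i ^ r := Finset.sum_nonneg fun i _ => rpow_nonneg (hu i) r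
  have hsv : (0:ℝ) ≤ ∑ i, v i ^ r := Finset.sum_nonneg fun i _ => rpow_nonneg (hv i) r
  have hsuv : (0:ℝ) ≤ ∑ i, (u i + v i) ^ r :=
    Finset.sum_nonneg fun i _ => rpow_nonneg (huv i) r
  have hmonu : (∑ i, u i ^ r) ≤ ∑ i, (u i + v i) ^ r :=
    Finset.sum_le_sum fun i _ => rpow_le_rpow (hu i) (by linarith [hv i]) hr0.le
  have hmonv : (∑ i, v i ^ r) ≤ ∑ i, (u i + v i) ^ r :=
    Finset.sum_le_sum fun i _ => rpow_le_rpow (hv i) (by linarith [hu i]) hr0.le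
  set A := (∑ i, u i ^ r) ^ (1/r) with hA
  set B := (∑ i, v i ^ r) ^ (1/r) with hB
  have hA0 : 0 ≤ A := rpow_nonneg hsu _
  have hB0 : 0 ≤ B := rpow_nonneg hsv _
  rcases eq_or_lt_of_le hA0 with hA' | hA'
  · rw [← hA', zero_add]
    exact rpow_le_rpow hsv hmonv (by positivity)
  rcases eq_or_lt_of_le hB0 with hB' | hB'
  · rw [← hB', add_zero]
    exact rpow_le_rpow hsu hmonu (by positivity)
  have hABpos : 0 < A + B := by linarith
  have hAr : A ^ r = ∑ i, u i ^ r := by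
    rw [hA, ← Real.rpow_mul hsu, one_div_mul_cancel hr0.ne', Real.rpow_one]
  have hBr : B ^ r = ∑ i, v i ^ r := by
    rw [hB, ← Real.rpow_mul hsv, one_div_mul_cancel hr0.ne', Real.rpow_one]
  -- pointwise concavity bound
  have hpt : ∀ i, (A+B)^r * ((A/(A+B)) * (u i / A)^r + (B/(A+B)) * (v i / B)^r)
      ≤ (u i + v i)^r := by
    intro i
    have hconc := (Real.concaveOn_rpow hr0.le hr1).2 (Set.mem_Ici.2 (div_nonneg (hu i) hA0))
      (Set.mem_Ici.2 (div_nonneg (hv i) hB0)) (by positivity : (0:ℝ) ≤ A/(A+B))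
      (by positivity : (0:ℝ) ≤ B/(A+B)) (by field_simp)
    simp only [smul_eq_mul] at hconc
    have e : (A/(A+B)) * (u i / A) + (B/(A+B)) * (v i / B) = (u i + v i)/(A+B) := by
      field_simp
    rw [e] at hconc
    have := mul_le_mul_of_nonneg_left hconc (rpow_nonneg hABpos.le r)
    calc (A+B)^r * ((A/(A+B)) * (u i / A)^r + (B/(A+B)) * (v i / B)^r)
        ≤ (A+B)^r * ((u i + v i)/(A+B))^r := this
      _ = (u i + v i)^r := by
          rw [← Real.mul_rpow hABpos.le (div_nonneg (huv i) hABpos.le),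
            mul_div_cancel₀ _ hABpos.ne']
  -- sum the pointwise bounds
  have hsum : (A+B)^r ≤ ∑ i, (u i + v i)^r := by
    have := Finset.sum_le_sum (fun i (_ : i ∈ Finset.univ) => hpt i)
    have e : ∑ i, (A+B)^r * ((A/(A+B)) * (u i / A)^r + (B/(A+B)) * (v i / B)^r)
        = (A+B)^r := by
      have eu : ∀ i, (u i / A)^r = u i ^ r / A ^ r := fun i => Real.div_rpow (hu i) hA0 r
      have ev : ∀ i, (v i / B)^r = v i ^ r / B ^ r := fun i => Real.div_rpow (hv i) hB0 r
      have hArpos : 0 < A ^ r := rpow_pos_of_pos hA' r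
      have hBrpos : 0 < B ^ r := rpow_pos_of_pos hB' r
      simp only [eu, ev]
      rw [← Finset.mul_sum, Finset.sum_add_distrib, ← Finset.mul_sum, ← Finset.mul_sum,
        ← Finset.sum_div, ← Finset.sum_div, ← hAr, ← hBr, div_self hArpos.ne',
        div_self hBrpos.ne', mul_one, mul_one, ← add_div, div_self hABpos.ne', mul_one]
    rw [e] at this
    exact this
  calc A + B = ((A+B)^r)^(1/r) := by
        rw [← Real.rpow_mul hABpos.le, mul_one_div_cancel hr0.ne', Real.rpow_one]
    _ ≤ (∑ i, (u i + v i)^r)^(1/r) := rpow_le_rpow (rpow_nonneg hABpos.le r) hsum (by positivity)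

theorem lp_norm_squared_strongly_convex
    {d : ℕ} (p : ℝ) (hp1 : 1 < p) (hp2 : p ≤ 2) :
    ∀ x y : Fin d → ℝ,
      (fun z : Fin d → ℝ => 1 / (2 * (p - 1)) * ((∑ i, |z i| ^ p) ^ (1 / p)) ^ 2)
          ((1 / 2 : ℝ) • (x + y)) ≤
        ((fun z : Fin d → ℝ => 1 / (2 * (p - 1)) * ((∑ i, |z i| ^ p) ^ (1 / p)) ^ 2) x +
          (fun z : Fin d → ℝ => 1 / (2 * (p - 1)) * ((∑ i, |z i| ^ p) ^ (1 / p)) ^ 2) y) / 2 -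
        1 / 8 * ((∑ i, |x i - y i| ^ p) ^ (1 / p)) ^ 2 := by
  intro x y
  have hppos : (0:ℝ) < p := by linarith
  have hpne : p ≠ 0 := hppos.ne'
  have hc : (0:ℝ) < p - 1 := by linarith
  simp only [Pi.smul_apply, Pi.add_apply, smul_eq_mul]
  set m : Fin d → ℝ := fun i => 1/2 * (x i + y i) with hm
  set h : Fin d → ℝ := fun i => 1/2 * (x i - y i) with hh
  -- helper : square of rpow
  have pow2 : ∀ S : ℝ, 0 ≤ S → (S^(1/p))^2 = S^(2/p) := by
    intro S hS
    rw [← Real.rpow_natCast (S^(1/p)) 2, ← Real.rpow_mul hS]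
    push_cast
    rw [show 1/p*(2:ℝ) = 2/p by ring]
  have sqh : ∀ c : ℝ, (c^2)^(p/2) = |c|^p := by
    intro c
    rw [← sq_abs, ← Real.rpow_natCast |c| 2, ← Real.rpow_mul (abs_nonneg c)]
    push_cast
    rw [show (2:ℝ)*(p/2) = p by ring]
  -- sums and their nonnegativity
  have hsx : (0:ℝ) ≤ ∑ i, |x i|^p := Finset.sum_nonneg fun i _ => rpow_nonneg (abs_nonneg _) _
  have hsy : (0:ℝ) ≤ ∑ i, |y i|^p := Finset.sum_nonneg fun i _ => rpow_nonneg (abs_nonneg _) _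
  have hsm : (0:ℝ) ≤ ∑ i, |m i|^p := Finset.sum_nonneg fun i _ => rpow_nonneg (abs_nonneg _) _
  have hsh : (0:ℝ) ≤ ∑ i, |h i|^p := Finset.sum_nonneg fun i _ => rpow_nonneg (abs_nonneg _) _
  have hsd : (0:ℝ) ≤ ∑ i, |x i - y i|^p :=
    Finset.sum_nonneg fun i _ => rpow_nonneg (abs_nonneg _) _
  -- Step 1: reverse Minkowski with r = p/2
  have hr0 : (0:ℝ) < p/2 := by linarith
  have hr1 : p/2 ≤ 1 := by linarith
  have step1 := rev_mink hr0 hr1 (fun i => (m i)^2) (fun i => (p-1)*(h i)^2)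
    (fun i => sq_nonneg _) (fun i => by positivity)
  rw [show (1:ℝ)/(p/2) = 2/p by rw [one_div_div]] at step1
  have em : ∀ i : Fin d, ((m i)^2)^(p/2) = |m i|^p := fun i => sqh (m i)
  have ev : ∀ i : Fin d, ((p-1)*(h i)^2)^(p/2) = (p-1)^(p/2) * |h i|^p := fun i => by
    rw [Real.mul_rpow hc.le (sq_nonneg _), sqh]
  simp only [em, ev, ← Finset.mul_sum] at step1
  rw [Real.mul_rpow (rpow_nonneg hc.le _) hsh, ← Real.rpow_mul hc.le,
    show p/2*(2/p) = 1 by field_simp, Real.rpow_one] at step1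
  -- Step 2: coordinatewise BCL scalar inequality
  have hscal : ∀ i : Fin d, ((m i)^2 + (p-1)*(h i)^2)^(p/2) ≤ (|x i|^p + |y i|^p)/2 := by
    intro i
    have := bcl_scalar hp1 hp2 (m i) (h i)
    rw [show m i + h i = x i by simp only [hm, hh]; ring,
      show m i - h i = y i by simp only [hm, hh]; ring] at this
    exact this
  have hsum2 : ∑ i, ((m i)^2 + (p-1)*(h i)^2)^(p/2) ≤ ((∑ i, |x i|^p) + ∑ i, |y i|^p)/2 := by
    calc ∑ i, ((m i)^2 + (p-1)*(h i)^2)^(p/2) ≤ ∑ i, (|x i|^p + |y i|^p)/2 :=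
          Finset.sum_le_sum fun i _ => hscal i
      _ = ((∑ i, |x i|^p) + ∑ i, |y i|^p)/2 := by
          rw [← Finset.sum_div, Finset.sum_add_distrib]
  have step2 : (∑ i, ((m i)^2 + (p-1)*(h i)^2)^(p/2))^(2/p)
      ≤ (((∑ i, |x i|^p) + ∑ i, |y i|^p)/2)^(2/p) := by
    apply rpow_le_rpow _ hsum2 (by positivity)
    exact Finset.sum_nonneg fun i _ => rpow_nonneg (by positivity) _
  -- Step 3: convexity of t ↦ t^(2/p)
  have h2p : (1:ℝ) ≤ 2/p := by rw [le_div_iff₀ hppos]; linarith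
  have step3 : (((∑ i, |x i|^p) + ∑ i, |y i|^p)/2)^(2/p)
      ≤ ((∑ i, |x i|^p)^(2/p) + (∑ i, |y i|^p)^(2/p))/2 := by
    have hcv := (convexOn_rpow h2p).2 (Set.mem_Ici.2 hsx) (Set.mem_Ici.2 hsy)
      (by norm_num : (0:ℝ) ≤ 1/2) (by norm_num : (0:ℝ) ≤ 1/2) (by norm_num)
    simp only [smul_eq_mul] at hcv
    calc (((∑ i, |x i|^p) + ∑ i, |y i|^p)/2)^(2/p)
        = (1/2*(∑ i, |x i|^p) + 1/2*(∑ i, |y i|^p))^(2/p) := by ring_nf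
      _ ≤ 1/2*(∑ i, |x i|^p)^(2/p) + 1/2*(∑ i, |y i|^p)^(2/p) := hcv
      _ = ((∑ i, |x i|^p)^(2/p) + (∑ i, |y i|^p)^(2/p))/2 := by ring
  have key : (∑ i, |m i|^p)^(2/p) + (p-1)*(∑ i, |h i|^p)^(2/p)
      ≤ ((∑ i, |x i|^p)^(2/p) + (∑ i, |y i|^p)^(2/p))/2 := by
    linarith [step1, step2, step3]
  -- relate difference sum to h
  have ed : (∑ i, |x i - y i|^p) = 2^p * ∑ i, |h i|^p := by
    rw [Finset.mul_sum]
    apply Finset.sum_congr rfl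
    intro i _
    rw [show x i - y i = 2 * h i by simp only [hh]; ring, abs_mul, abs_two,
      Real.mul_rpow (by norm_num) (abs_nonneg _)]
  have ed2 : (∑ i, |x i - y i|^p)^(2/p) = 4 * (∑ i, |h i|^p)^(2/p) := by
    rw [ed, Real.mul_rpow (rpow_nonneg (by norm_num) _) hsh, ← Real.rpow_mul (by norm_num),
      show p*(2/p) = 2 by field_simp]
    norm_num
  -- final arithmetic
  rw [show (∑ i, |1/2*(x i + y i)|^p) = ∑ i, |m i|^p from
    Finset.sum_congr rfl (fun i _ => rfl)]
  rw [pow2 _ hsm, pow2 _ hsx, pow2 _ hsy, pow2 _ hsd, ed2]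
  set X := (∑ i, |x i|^p)^(2/p)
  set Y := (∑ i, |y i|^p)^(2/p)
  set M := (∑ i, |m i|^p)^(2/p)
  set H := (∑ i, |h i|^p)^(2/p)
  have h2 : 1/(2*(p-1)) * (M + (p-1)*H) ≤ 1/(2*(p-1)) * ((X+Y)/2) :=
    mul_le_mul_of_nonneg_left key (by positivity)
  have e1 : 1/(2*(p-1)) * (M + (p-1)*H) = 1/(2*(p-1))*M + H/2 := by
    field_simp
  have e2 : 1/(2*(p-1)) * ((X+Y)/2) = (1/(2*(p-1))*X + 1/(2*(p-1))*Y)/2 := by ring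
  rw [e1, e2] at h2
  linarith
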